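/- For every f ∈ ℝⁿ, the empirical Kullback–Leibler divergence satisfies KL_n(a, f) = ℓ(f) − ℓ(a), and moreover KL_n(a, f) ≥ 0. -/

import Mathlib

open MeasureTheory

noncomputable section

/-- `S⁰(f,t) = Σᵢ Yᵢ(t) e^{fᵢ}` with `Yᵢ(t) = 1(zᵢ ≥ t)`. -/
def S0 {n : ℕ} (z f : Fin n → ℝ) (t : ℝ) : ℝ :=
  ∑ i, if t ≤ z i then Real.exp (f i) else 0

/-- The compensated loss
`ℓ(f) = −(1/n) Σᵢ ∫₀^τ [fᵢ − log S⁰(f,t)] Yᵢ(t) λ₀(t) e^{aᵢ} dt`. -/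
def compLoss {n : ℕ} (τ : ℝ) (z a : Fin n → ℝ) (lam : ℝ → ℝ)
    (f : Fin n → ℝ) : ℝ :=
  -(1 / (n : ℝ)) * ∑ i, ∫ t in (0 : ℝ)..τ,
    (f i - Real.log (S0 z f t)) * (if t ≤ z i then (1 : ℝ) else 0) *
      lam t * Real.exp (a i)

/-- The empirical Kullback–Leibler divergence
`KLₙ(a,f) = (1/n) Σᵢ ∫₀^τ log( e^{aᵢ} S⁰(f,t) / (e^{fᵢ} S⁰(a,t)) ) Yᵢ(t) λ₀(t) e^{aᵢ} dt`. -/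
def KLn {n : ℕ} (τ : ℝ) (z a : Fin n → ℝ) (lam : ℝ → ℝ)
    (f : Fin n → ℝ) : ℝ :=
  (1 / (n : ℝ)) * ∑ i, ∫ t in (0 : ℝ)..τ,
    Real.log (Real.exp (a i) * S0 z f t / (Real.exp (f i) * S0 z a t)) *
      (if t ≤ z i then (1 : ℝ) else 0) * lam t * Real.exp (a i)

end

section Aux

lemma S0_nonneg {n : ℕ} (z g : Fin n → ℝ) (t : ℝ) : 0 ≤ S0 z g t :=
  Finset.sum_nonneg fun i _ => by
    by_cases h : t ≤ z i <;> simp [h, (Real.exp_pos _).le]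

lemma exp_le_S0 {n : ℕ} (z g : Fin n → ℝ) {t : ℝ} {i : Fin n} (h : t ≤ z i) :
    Real.exp (g i) ≤ S0 z g t := by
  have h1 : (if t ≤ z i then Real.exp (g i) else 0) ≤ S0 z g t := by
    refine Finset.single_le_sum (f := fun j => if t ≤ z j then Real.exp (g j) else 0)
      (fun j _ => ?_) (Finset.mem_univ i)
    by_cases hj : t ≤ z j <;> simp [hj, (Real.exp_pos _).le]
  simpa [h] using h1

lemma S0_pos {n : ℕ} (z g : Fin n → ℝ) {t : ℝ} {i : Fin n} (h : t ≤ z i) :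
    0 < S0 z g t :=
  lt_of_lt_of_le (Real.exp_pos _) (exp_le_S0 z g h)

lemma S0_le {n : ℕ} (z g : Fin n → ℝ) (t : ℝ) :
    S0 z g t ≤ ∑ j, Real.exp (g j) :=
  Finset.sum_le_sum fun j _ => by
    by_cases hj : t ≤ z j <;> simp [hj, (Real.exp_pos _).le]

lemma S0_measurable {n : ℕ} (z g : Fin n → ℝ) : Measurable (S0 z g) := by
  apply Finset.measurable_sum
  intro i _
  exact Measurable.ite measurableSet_Iic measurable_const measurable_const

lemma H_intble {n : ℕ} (τ : ℝ) (z : Fin n → ℝ) (lam : ℝ → ℝ)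
    (hmeas : Measurable lam) (hint : IntervalIntegrable lam volume 0 τ)
    (g : Fin n → ℝ) (i : Fin n) (c : ℝ) :
    IntervalIntegrable
      (fun t => (g i - Real.log (S0 z g t)) * (if t ≤ z i then (1 : ℝ) else 0) * lam t * c)
      volume 0 τ := by
  have heq : (fun t => (g i - Real.log (S0 z g t)) * (if t ≤ z i then (1 : ℝ) else 0) * lam t * c)
      = fun t => ((g i - Real.log (S0 z g t)) * (if t ≤ z i then (1 : ℝ) else 0) * c) * lam t := by
    funext t; ring
  rw [heq, intervalIntegrable_iff] at *
  refine hint.bdd_mul (c := (|Real.log (∑ j, Real.exp (g j))| + |g i|) * |c|) ?_ ?_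
  · refine Measurable.aestronglyMeasurable ?_
    exact ((measurable_const.sub ((Real.measurable_log).comp (S0_measurable z g))).mul
      (Measurable.ite measurableSet_Iic measurable_const measurable_const)).mul measurable_const
  · refine Filter.Eventually.of_forall fun t => ?_
    by_cases h : t ≤ z i
    · simp only [h, if_pos, mul_one]
      rw [Real.norm_eq_abs, abs_mul]
      refine mul_le_mul_of_nonneg_right ?_ (abs_nonneg c)
      have h1 : g i ≤ Real.log (S0 z g t) :=
        (Real.le_log_iff_exp_le (S0_pos z g h)).mpr (exp_le_S0 z g h)
      have h2 : Real.log (S0 z g t) ≤ Real.log (∑ j, Real.exp (g j)) :=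
        Real.log_le_log (S0_pos z g h) (S0_le z g t)
      have h3 : |g i - Real.log (S0 z g t)| = Real.log (S0 z g t) - g i := by
        rw [abs_sub_comm]; exact abs_of_nonneg (by linarith)
      rw [h3]
      have := le_abs_self (Real.log (∑ j, Real.exp (g j)))
      have := neg_abs_le (g i)
      linarith
    · simp only [h, if_neg, not_false_iff, mul_zero, zero_mul, norm_zero]
      positivity

lemma KL_pt {n : ℕ} (z a f : Fin n → ℝ) (i : Fin n) (t : ℝ) :
    Real.log (Real.exp (a i) * S0 z f t / (Real.exp (f i) * S0 z a t)) *
      (if t ≤ z i then (1 : ℝ) else 0)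
    = ((a i - Real.log (S0 z a t)) - (f i - Real.log (S0 z f t))) *
      (if t ≤ z i then (1 : ℝ) else 0) := by
  by_cases h : t ≤ z i
  · have hf := S0_pos z f h
    have ha := S0_pos z a h
    rw [Real.log_div (mul_pos (Real.exp_pos _) hf).ne' (mul_pos (Real.exp_pos _) ha).ne',
        Real.log_mul (Real.exp_ne_zero _) hf.ne',
        Real.log_mul (Real.exp_ne_zero _) ha.ne',
        Real.log_exp, Real.log_exp]
    ring
  · simp [h]

lemma gibbs_pt {n : ℕ} (z a f : Fin n → ℝ) (t : ℝ) :
    0 ≤ ∑ i, Real.log (Real.exp (a i) * S0 z f t / (Real.exp (f i) * S0 z a t)) *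
      (if t ≤ z i then (1 : ℝ) else 0) * Real.exp (a i) := by
  by_cases hex : ∃ i, t ≤ z i
  · obtain ⟨i0, hi0⟩ := hex
    have hSf := S0_pos z f hi0
    have hSa := S0_pos z a hi0
    have key : ∀ i : Fin n,
        (if t ≤ z i then Real.exp (a i) - Real.exp (f i) * (S0 z a t / S0 z f t) else 0) ≤
        Real.log (Real.exp (a i) * S0 z f t / (Real.exp (f i) * S0 z a t)) *
          (if t ≤ z i then (1 : ℝ) else 0) * Real.exp (a i) := by
      intro i
      by_cases h : t ≤ z i
      · simp only [h, if_pos, mul_one]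
        set X := Real.exp (f i) * S0 z a t / (Real.exp (a i) * S0 z f t) with hX
        have hxpos : (0 : ℝ) < X := by
          apply div_pos (mul_pos (Real.exp_pos _) hSa) (mul_pos (Real.exp_pos _) hSf)
        have hlog := Real.log_le_sub_one_of_pos hxpos
        have hinv : Real.log (Real.exp (a i) * S0 z f t / (Real.exp (f i) * S0 z a t))
            = - Real.log X := by
          rw [← Real.log_inv]
          congr 1
          rw [hX]
          field_simp
        rw [hinv]
        have he : (0 : ℝ) < Real.exp (a i) := Real.exp_pos _
        have hmul : (1 - X) * Real.exp (a i) ≤ (- Real.log X) * Real.exp (a i) :=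
          mul_le_mul_of_nonneg_right (by linarith) he.le
        have hxe : (1 - X) * Real.exp (a i)
            = Real.exp (a i) - Real.exp (f i) * (S0 z a t / S0 z f t) := by
          rw [hX]; field_simp
        linarith
      · simp [h]
    have hsum : ∑ i, (if t ≤ z i then Real.exp (a i) - Real.exp (f i) * (S0 z a t / S0 z f t) else 0)
        = 0 := by
      have hterm : ∀ i : Fin n,
          (if t ≤ z i then Real.exp (a i) - Real.exp (f i) * (S0 z a t / S0 z f t) else 0)
          = (if t ≤ z i then Real.exp (a i) else 0)
            - (if t ≤ z i then Real.exp (f i) else 0) * (S0 z a t / S0 z f t) := by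
        intro i; split_ifs <;> simp
      rw [Finset.sum_congr rfl (fun i _ => hterm i), Finset.sum_sub_distrib, ← Finset.sum_mul]
      have ha' : (∑ i, if t ≤ z i then Real.exp (a i) else 0) = S0 z a t := rfl
      have hf' : (∑ i, if t ≤ z i then Real.exp (f i) else 0) = S0 z f t := rfl
      rw [ha', hf']
      field_simp
      ring
    calc (0 : ℝ) = ∑ i, (if t ≤ z i then Real.exp (a i) - Real.exp (f i) * (S0 z a t / S0 z f t) else 0) := hsum.symm
      _ ≤ _ := Finset.sum_le_sum fun i _ => key i
  · push_neg at hex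
    refine le_of_eq (Finset.sum_eq_zero fun i _ => ?_).symm
    rw [if_neg (not_le.mpr (hex i))]
    ring

end Aux

/-- `KLₙ(a, f) = ℓ(f) − ℓ(a)` and `KLₙ(a, f) ≥ 0`. -/
theorem KL_eq_loss_diff_and_nonneg (n : ℕ) (hn : 1 ≤ n) (τ : ℝ) (hτ : 0 < τ)
    (z : Fin n → ℝ) (hz : ∀ i, 0 ≤ z i) (a : Fin n → ℝ)
    (lam : ℝ → ℝ) (hmeas : Measurable lam) (hpos : ∀ t, 0 ≤ lam t)
    (hint : IntervalIntegrable lam MeasureTheory.volume 0 τ)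
    (f : Fin n → ℝ) :
    KLn τ z a lam f = compLoss τ z a lam f - compLoss τ z a lam a ∧
      0 ≤ KLn τ z a lam f := by
  have hτ' : (0 : ℝ) ≤ τ := hτ.le
  have hH : ∀ (g : Fin n → ℝ) (i : Fin n), IntervalIntegrable
      (fun t => (g i - Real.log (S0 z g t)) * (if t ≤ z i then (1 : ℝ) else 0) *
        lam t * Real.exp (a i)) volume 0 τ :=
    fun g i => H_intble τ z lam hmeas hint g i _
  have hpt : ∀ (i : Fin n) (t : ℝ),
      Real.log (Real.exp (a i) * S0 z f t / (Real.exp (f i) * S0 z a t)) *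
        (if t ≤ z i then (1 : ℝ) else 0) * lam t * Real.exp (a i)
      = (a i - Real.log (S0 z a t)) * (if t ≤ z i then (1 : ℝ) else 0) *
          lam t * Real.exp (a i)
        - (f i - Real.log (S0 z f t)) * (if t ≤ z i then (1 : ℝ) else 0) *
          lam t * Real.exp (a i) := by
    intro i t
    have h1 : Real.log (Real.exp (a i) * S0 z f t / (Real.exp (f i) * S0 z a t)) *
        (if t ≤ z i then (1 : ℝ) else 0) * lam t * Real.exp (a i)
        = (Real.log (Real.exp (a i) * S0 z f t / (Real.exp (f i) * S0 z a t)) *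
          (if t ≤ z i then (1 : ℝ) else 0)) * (lam t * Real.exp (a i)) := by ring
    rw [h1, KL_pt z a f i t]
    ring
  have hI : ∀ i : Fin n,
      (∫ t in (0 : ℝ)..τ,
        Real.log (Real.exp (a i) * S0 z f t / (Real.exp (f i) * S0 z a t)) *
          (if t ≤ z i then (1 : ℝ) else 0) * lam t * Real.exp (a i))
      = (∫ t in (0 : ℝ)..τ, (a i - Real.log (S0 z a t)) * (if t ≤ z i then (1 : ℝ) else 0) *
          lam t * Real.exp (a i))
        - ∫ t in (0 : ℝ)..τ, (f i - Real.log (S0 z f t)) * (if t ≤ z i then (1 : ℝ) else 0) *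
          lam t * Real.exp (a i) := by
    intro i
    have h2 : (∫ t in (0 : ℝ)..τ,
        Real.log (Real.exp (a i) * S0 z f t / (Real.exp (f i) * S0 z a t)) *
          (if t ≤ z i then (1 : ℝ) else 0) * lam t * Real.exp (a i))
        = ∫ t in (0 : ℝ)..τ,
          ((a i - Real.log (S0 z a t)) * (if t ≤ z i then (1 : ℝ) else 0) *
            lam t * Real.exp (a i)
          - (f i - Real.log (S0 z f t)) * (if t ≤ z i then (1 : ℝ) else 0) *
            lam t * Real.exp (a i)) := by
      apply intervalIntegral.integral_congr
      intro t _
      exact hpt i t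
    rw [h2, intervalIntegral.integral_sub (hH a i) (hH f i)]
  constructor
  · simp only [KLn, compLoss]
    rw [Finset.sum_congr rfl (fun i _ => hI i), Finset.sum_sub_distrib]
    ring
  · have hKLint : ∀ i : Fin n, IntervalIntegrable
        (fun t => Real.log (Real.exp (a i) * S0 z f t / (Real.exp (f i) * S0 z a t)) *
          (if t ≤ z i then (1 : ℝ) else 0) * lam t * Real.exp (a i)) volume 0 τ := by
      intro i
      have : (fun t => Real.log (Real.exp (a i) * S0 z f t / (Real.exp (f i) * S0 z a t)) *
          (if t ≤ z i then (1 : ℝ) else 0) * lam t * Real.exp (a i))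
          = fun t => (a i - Real.log (S0 z a t)) * (if t ≤ z i then (1 : ℝ) else 0) *
              lam t * Real.exp (a i)
            - (f i - Real.log (S0 z f t)) * (if t ≤ z i then (1 : ℝ) else 0) *
              lam t * Real.exp (a i) := by
        funext t; exact hpt i t
      rw [this]
      exact (hH a i).sub (hH f i)
    have hswap : (∑ i : Fin n, ∫ t in (0 : ℝ)..τ,
        Real.log (Real.exp (a i) * S0 z f t / (Real.exp (f i) * S0 z a t)) *
          (if t ≤ z i then (1 : ℝ) else 0) * lam t * Real.exp (a i))
        = ∫ t in (0 : ℝ)..τ, ∑ i : Fin n,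
          Real.log (Real.exp (a i) * S0 z f t / (Real.exp (f i) * S0 z a t)) *
            (if t ≤ z i then (1 : ℝ) else 0) * lam t * Real.exp (a i) :=
      (intervalIntegral.integral_finset_sum (fun i _ => hKLint i)).symm
    have hnonneg : 0 ≤ ∫ t in (0 : ℝ)..τ, ∑ i : Fin n,
        Real.log (Real.exp (a i) * S0 z f t / (Real.exp (f i) * S0 z a t)) *
          (if t ≤ z i then (1 : ℝ) else 0) * lam t * Real.exp (a i) := by
      apply intervalIntegral.integral_nonneg hτ'
      intro t _
      have hre : (∑ i : Fin n,
          Real.log (Real.exp (a i) * S0 z f t / (Real.exp (f i) * S0 z a t)) *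
            (if t ≤ z i then (1 : ℝ) else 0) * lam t * Real.exp (a i))
          = (∑ i : Fin n,
            Real.log (Real.exp (a i) * S0 z f t / (Real.exp (f i) * S0 z a t)) *
              (if t ≤ z i then (1 : ℝ) else 0) * Real.exp (a i)) * lam t := by
        rw [Finset.sum_mul]
        exact Finset.sum_congr rfl fun i _ => by ring
      rw [hre]
      exact mul_nonneg (gibbs_pt z a f t) (hpos t)
    simp only [KLn]
    rw [hswap] at *
    have h1n : (0 : ℝ) ≤ 1 / (n : ℝ) := by positivity
    exact mul_nonneg h1n hnonneg
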